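/- Let f_1(x) = x/2 and f_2(x) = (3x + 1)/2 be affine maps of ℝ. Then the semigroup generated by f_1 and f_2 is free of rank 2 with free basis f_1, f_2: for any two finite sequences of indices in {1, 2}, if the corresponding compositions of f_1 and f_2 are equal as functions on ℝ, then the two index sequences are identical. -/

import Mathlib

/-- Integer intercept invariant, computed from the reversed word
(head = innermost map). -/
def collatzMv : List (Fin 2) → ℤ
  | [] => 0
  | a :: l => 2 * collatzMv l + (if a = 1 then 3 ^ (l.count 1) else 0)

lemma collatzMv_inj : ∀ r₁ r₂ : List (Fin 2), r₁.length = r₂.length →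
    r₁.count 1 = r₂.count 1 → collatzMv r₁ = collatzMv r₂ → r₁ = r₂ := by
  intro r₁
  induction r₁ with
  | nil =>
    intro r₂ h _ _
    exact (List.length_eq_zero_iff.mp h.symm).symm
  | cons a l ih =>
    intro r₂ hlen hcount hm
    cases r₂ with
    | nil => simp at hlen
    | cons b t =>
      have hlen' : l.length = t.length := by simpa using hlen
      simp only [collatzMv] at hm
      obtain ⟨c, hc⟩ : Odd ((3:ℤ) ^ (t.count 1)) := Odd.pow ⟨1, by ring⟩
      obtain ⟨d, hd⟩ : Odd ((3:ℤ) ^ (l.count 1)) := Odd.pow ⟨1, by ring⟩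
      have hab : a = b := by
        fin_cases a <;> fin_cases b <;> simp_all <;> omega
      subst hab
      have hcount' : l.count 1 = t.count 1 := by
        fin_cases a <;> simp_all [List.count_cons]
      have hm' : collatzMv l = collatzMv t := by
        fin_cases a <;> simp_all
      rw [ih t hlen' hcount' hm']

lemma collatz_foldr_apply (l : List (ℝ → ℝ)) (g : ℝ → ℝ) (x : ℝ) :
    l.foldr (· ∘ ·) g x = l.foldr (· ∘ ·) id (g x) := by
  induction l with
  | nil => rfl
  | cons h t ih => simp [Function.comp, ih]

lemma collatz_comp_formula : ∀ (w : List (Fin 2)) (x : ℝ),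
    (w.map ![fun x => x / 2, fun x => (3 * x + 1) / 2]).foldr (· ∘ ·) id x
      = ((3:ℝ) ^ (w.count 1) * x + (collatzMv w.reverse : ℝ)) / 2 ^ w.length := by
  intro w
  induction w using List.reverseRecOn with
  | nil => intro x; simp [collatzMv]
  | append_singleton w c ihw =>
    intro x
    rw [List.map_append, List.foldr_append, collatz_foldr_apply]
    have hrev : (w ++ [c]).reverse = c :: w.reverse := by simp
    rw [hrev]
    fin_cases c <;>
      simp only [List.map_cons, List.map_nil, List.foldr_cons, List.foldr_nil,
        Matrix.cons_val_zero, Matrix.cons_val_one, Matrix.head_cons, collatzMv,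
        List.count_append, List.count_cons, List.count_nil, List.length_append,
        List.length_cons, List.length_nil, List.count_reverse] <;>
      rw [ihw] <;>
      push_cast <;>
      simp <;>
      field_simp <;>
      ring

lemma collatz_pow_eq (a b c d : ℕ) (h : 3 ^ a * 2 ^ b = 3 ^ c * 2 ^ d) :
    a = c ∧ b = d := by
  have e1 : (3 ^ a * 2 ^ b).factorization = (3 ^ a).factorization + (2 ^ b).factorization :=
    Nat.factorization_mul (by positivity) (by positivity)
  have e2 : (3 ^ c * 2 ^ d).factorization = (3 ^ c).factorization + (2 ^ d).factorization :=
    Nat.factorization_mul (by positivity) (by positivity)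
  have hfac := congrArg Nat.factorization h
  rw [e1, e2] at hfac
  have h3 := congrArg (fun g : ℕ →₀ ℕ => g 3) hfac
  have h2 := congrArg (fun g : ℕ →₀ ℕ => g 2) hfac
  simp [Nat.factorization_pow, Nat.Prime.factorization (by norm_num : Nat.Prime 3),
    Nat.Prime.factorization (by norm_num : Nat.Prime 2), Finsupp.single_apply] at h3 h2
  exact ⟨h3, h2⟩

/-- The affine maps `f₁ x = x / 2` and `f₂ x = (3x + 1) / 2` generate a free
semigroup of rank 2 with free basis `f₁, f₂`: any two index words over `{1, 2}`
giving the same composition are identical. -/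
theorem collatz_maps_generate_free_semigroup
    (f : Fin 2 → ℝ → ℝ)
    (hf : f = ![fun x => x / 2, fun x => (3 * x + 1) / 2]) :
    ∀ w₁ w₂ : List (Fin 2),
      (w₁.map f).foldr (· ∘ ·) id = (w₂.map f).foldr (· ∘ ·) id → w₁ = w₂ := by
  subst hf
  intro w₁ w₂ h
  have h0 := congrFun h 0
  have h1 := congrFun h 1
  rw [collatz_comp_formula, collatz_comp_formula] at h0 h1
  set k₁ := w₁.count 1 with hk₁
  set k₂ := w₂.count 1 with hk₂
  set n₁ := w₁.length with hn₁
  set n₂ := w₂.length with hn₂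
  set m₁ := collatzMv w₁.reverse with hm₁
  set m₂ := collatzMv w₂.reverse with hm₂
  have two1 : (2:ℝ) ^ n₁ ≠ 0 := by positivity
  have two2 : (2:ℝ) ^ n₂ ≠ 0 := by positivity
  -- slopes equal
  have hA : (3:ℝ) ^ k₁ * 2 ^ n₂ = 3 ^ k₂ * 2 ^ n₁ := by
    field_simp at h0 h1
    nlinarith [h0, h1]
  have hAnat : (3:ℕ) ^ k₁ * 2 ^ n₂ = 3 ^ k₂ * 2 ^ n₁ := by
    exact_mod_cast hA
  obtain ⟨hk, hn⟩ := collatz_pow_eq _ _ _ _ hAnat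
  have hm : m₁ = m₂ := by
    field_simp at h0
    rw [hn] at h0
    field_simp at h0
    simpa using h0
  have := collatzMv_inj w₁.reverse w₂.reverse (by simpa using hn.symm)
    (by simpa [List.count_reverse] using hk) hm
  exact List.reverse_injective this
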